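/- Let M be an m×m complex matrix (m ≥ 1) and let ρ(M) be its spectral radius. Then lim sup_{n→∞} |tr(M^n)|^{1/n} = ρ(M), where tr denotes the trace and the lim sup is taken over the sequence of nonnegative reals |tr(M^n)|^{1/n} for n ≥ 1. -/

import Mathlib

open Polynomial Matrix Filter Finset


lemma eval_charpoly' {m : ℕ} (M : Matrix (Fin m) (Fin m) ℂ) (r : ℂ) :
    M.charpoly.eval r = (r • (1 : Matrix (Fin m) (Fin m) ℂ) - M).det := by
  rw [Matrix.charpoly, eval_det, matPolyEquiv_charmatrix]
  congr 1
  simp [Matrix.scalar, smul_eq_diagonal_mul, algebraMap]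

lemma det_aeval_prod {m : ℕ} (M : Matrix (Fin m) (Fin m) ℂ) (R : Multiset ℂ) :
    (Polynomial.aeval M (R.map (fun r => X - C r)).prod).det
      = (R.map (fun r => (M - r • 1).det)).prod := by
  induction R using Multiset.induction with
  | empty => simp
  | cons a s ih =>
    have h1 : (Polynomial.aeval M) (X - C a) = M - a • 1 := by
      simp [Algebra.algebraMap_eq_smul_one]
    simp only [Multiset.map_cons, Multiset.prod_cons, _root_.map_mul, Matrix.det_mul, ih, h1]

lemma prod_map_swap (s t : Multiset ℂ) (f : ℂ → ℂ → ℂ) :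
    (s.map (fun a => (t.map (f a)).prod)).prod
      = (t.map (fun b => (s.map (fun a => f a b)).prod)).prod := by
  induction s using Multiset.induction with
  | empty => simp
  | cons a s ih =>
    simp [Multiset.prod_map_mul, ih]

lemma prod_map_neg (s : Multiset ℂ) (f : ℂ → ℂ) :
    (s.map (fun a => -f a)).prod = (-1) ^ Multiset.card s * (s.map f).prod := by
  induction s using Multiset.induction with
  | empty => simp
  | cons a s ih => simp [ih, pow_succ]; ring

lemma prod_map_const_mul (c : ℂ) (s : Multiset ℂ) (f : ℂ → ℂ) :
    (s.map (fun a => c * f a)).prod = c ^ Multiset.card s * (s.map f).prod := by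
  induction s using Multiset.induction with
  | empty => simp
  | cons a s ih => simp [ih, pow_succ]; ring

lemma charpoly_eq_prod {m : ℕ} (M : Matrix (Fin m) (Fin m) ℂ) :
    M.charpoly = (M.charpoly.roots.map (fun a => X - C a)).prod :=
  (IsAlgClosed.splits _).eq_prod_roots_of_monic M.charpoly_monic

lemma card_roots_charpoly {m : ℕ} (M : Matrix (Fin m) (Fin m) ℂ) :
    Multiset.card M.charpoly.roots = m := by
  rw [splits_iff_card_roots.mp (IsAlgClosed.splits _), Matrix.charpoly_natDegree_eq_dim,
    Fintype.card_fin]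

lemma eval_charpoly_pow {m : ℕ} (M : Matrix (Fin m) (Fin m) ℂ) {n : ℕ} (hn : 1 ≤ n) (y : ℂ) :
    (Matrix.charpoly (M ^ n)).eval y
      = (M.charpoly.roots.map (fun a => y - a ^ n)).prod := by
  set p : Polynomial ℂ := X ^ n - C y with hp
  have hpm : p.Monic := monic_X_pow_sub_C y (by omega)
  have hpcard : Multiset.card p.roots = n := by
    rw [splits_iff_card_roots.mp (IsAlgClosed.splits _), hp]
    rw [natDegree_X_pow_sub_C]
  have hpprod : p = (p.roots.map (fun a => X - C a)).prod :=
    (IsAlgClosed.splits _).eq_prod_roots_of_monic hpm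
  -- step 1 : y • 1 - M^n = aeval M (C y - X^n) = - aeval M p
  have h1 : y • (1 : Matrix (Fin m) (Fin m) ℂ) - M ^ n = - (Polynomial.aeval M p) := by
    simp [hp, Algebra.algebraMap_eq_smul_one, neg_sub]
  rw [eval_charpoly', h1, Matrix.det_neg, Fintype.card_fin]
  rw [hpprod, det_aeval_prod]
  -- now : (-1)^m * Π_{r ∈ p.roots} det (M - r • 1)
  have h2 : ∀ r : ℂ, (M - r • 1).det = (-1 : ℂ) ^ m * (M.charpoly.roots.map (fun a => r - a)).prod := by
    intro r
    have : M - r • 1 = -(r • (1 : Matrix (Fin m) (Fin m) ℂ) - M) := by rw [neg_sub]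
    rw [this, Matrix.det_neg, Fintype.card_fin, ← eval_charpoly']
    congr 1
    conv_lhs => rw [charpoly_eq_prod M]
    rw [eval_multiset_prod, Multiset.map_map]
    simp
  have hmapc : Multiset.map (fun r => (M - r • 1).det) p.roots
      = Multiset.map (fun r => (-1 : ℂ) ^ m * (M.charpoly.roots.map (fun a => r - a)).prod) p.roots :=
    Multiset.map_congr rfl (fun r _ => h2 r)
  rw [hmapc, prod_map_const_mul, hpcard, prod_map_swap]
  have h3 : ∀ a : ℂ, (p.roots.map (fun r => r - a)).prod = (-1 : ℂ) ^ n * (a ^ n - y) := by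
    intro a
    have hf : (fun r : ℂ => r - a) = (fun r : ℂ => -(a - r)) := by funext r; ring
    rw [hf, prod_map_neg, hpcard]
    congr 1
    have := congrArg (Polynomial.eval a) hpprod
    rw [eval_multiset_prod, Multiset.map_map] at this
    simp only [hp, eval_sub, eval_pow, eval_X, eval_C] at this
    rw [this]
    congr 1
    apply Multiset.map_congr rfl
    intro r _
    simp
  have hmap2 : Multiset.map (fun b => (Multiset.map (fun a => a - b) p.roots).prod) M.charpoly.roots
      = Multiset.map (fun b => (-1 : ℂ) ^ n * (b ^ n - y)) M.charpoly.roots :=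
    Multiset.map_congr rfl (fun b _ => h3 b)
  rw [hmap2, prod_map_const_mul, card_roots_charpoly]
  have h4 : (fun b : ℂ => b ^ n - y) = (fun b : ℂ => -(y - b ^ n)) := by funext b; ring
  rw [h4, prod_map_neg, card_roots_charpoly]
  have hsign : ((-1 : ℂ)) ^ m * ((-1 : ℂ) ^ m) ^ n * ((-1 : ℂ) ^ n) ^ m * (-1 : ℂ) ^ m = 1 := by
    rw [← pow_mul, ← pow_mul, ← pow_add, ← pow_add, ← pow_add]
    exact Even.neg_one_pow ⟨m + m * n, by ring⟩
  rw [← mul_assoc, ← mul_assoc, ← mul_assoc, hsign, one_mul]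


lemma cesaro_pow (w : ℂ) (hw : ‖w‖ ≤ 1) :
    Tendsto (fun N : ℕ => (1 / N : ℂ) * ∑ n ∈ Finset.Ioc 0 N, w ^ n) atTop
      (nhds (if w = 1 then 1 else 0)) := by
  by_cases h1 : w = 1
  · subst h1
    rw [if_pos rfl]
    apply tendsto_const_nhds.congr'
    filter_upwards [eventually_ge_atTop 1] with N hN
    simp only [one_pow, Finset.sum_const, Nat.card_Ioc, Nat.sub_zero, nsmul_eq_mul, mul_one]
    rw [one_div, inv_mul_cancel₀]
    exact_mod_cast Nat.one_le_iff_ne_zero.mp hN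
  · simp only [h1, if_neg, if_false]
    have hbound : ∀ N : ℕ, ‖∑ n ∈ Finset.Ioc 0 N, w ^ n‖ ≤ 2 / ‖w - 1‖ + 1 := by
      intro N
      have hIoc : ∑ n ∈ Finset.Ioc 0 N, w ^ n = (∑ n ∈ Finset.range (N+1), w ^ n) - 1 := by
        have : Finset.range (N+1) = Finset.Ioc 0 N ∪ {0} := by
          ext x; simp [Finset.mem_range, Finset.mem_Ioc, Nat.lt_succ_iff]
        rw [this, Finset.sum_union (by simp)]
        simp
      rw [hIoc, geom_sum_eq h1]
      have hw1 : ‖w - 1‖ ≠ 0 := by simpa [sub_eq_zero] using h1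
      have hw1' : 0 < ‖w - 1‖ := lt_of_le_of_ne (norm_nonneg _) (Ne.symm hw1)
      refine (norm_sub_le _ _).trans ?_
      have hnum : ‖(w ^ (N + 1) - 1) / (w - 1)‖ ≤ 2 / ‖w - 1‖ := by
        rw [norm_div]
        gcongr
        refine (norm_sub_le _ _).trans ?_
        rw [norm_pow, norm_one]
        have := pow_le_one₀ (norm_nonneg w) hw (n := N + 1)
        linarith
      rw [norm_one]
      linarith
    have : Tendsto (fun N : ℕ => (2 / ‖w - 1‖ + 1) / N) atTop (nhds 0) :=
      tendsto_const_div_atTop_nhds_zero_nat _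
    refine squeeze_zero_norm (fun N => ?_) this
    rw [norm_mul, norm_div, norm_one]
    calc 1 / ‖(N:ℂ)‖ * ‖∑ n ∈ Finset.Ioc 0 N, w ^ n‖
        ≤ 1 / ‖(N:ℂ)‖ * (2 / ‖w - 1‖ + 1) := by
          gcongr
          exact hbound N
      _ = (2 / ‖w - 1‖ + 1) / N := by
          rw [Complex.norm_natCast]; ring

variable {α : Type*}

lemma multiset_sum_re (s : Multiset α) (f : α → ℂ) :
    (s.map f).sum.re = (s.map (fun a => (f a).re)).sum := by
  induction s using Multiset.induction with
  | empty => simp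
  | cons a s ih => simp [ih]

lemma multiset_sum_finset_sum (s : Multiset α) (T : Finset ℕ) (F : α → ℕ → ℂ) :
    ∑ n ∈ T, (s.map (fun a => F a n)).sum = (s.map (fun a => ∑ n ∈ T, F a n)).sum := by
  induction s using Multiset.induction with
  | empty => simp
  | cons a s ih => simp [ih, Finset.sum_add_distrib]

lemma tendsto_multiset_sum' (s : Multiset α) (g : α → ℕ → ℂ) (G : α → ℂ)
    (h : ∀ a ∈ s, Tendsto (g a) atTop (nhds (G a))) :
    Tendsto (fun N => (s.map (fun a => g a N)).sum) atTop (nhds ((s.map G).sum)) := by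
  induction s using Multiset.induction with
  | empty => simpa using tendsto_const_nhds
  | cons a s ih =>
    simp only [Multiset.map_cons, Multiset.sum_cons]
    exact (h a (Multiset.mem_cons_self a s)).add
      (ih (fun b hb => h b (Multiset.mem_cons_of_mem hb)))

lemma sum_mul_sum_multiset (s t : Multiset ℂ) (f g : ℂ → ℂ) :
    (s.map f).sum * (t.map g).sum = ((s ×ˢ t).map (fun p => f p.1 * g p.2)).sum := by
  induction s using Multiset.induction with
  | empty => simp
  | cons a s ih =>
    rw [Multiset.cons_product]
    simp only [Multiset.map_cons, Multiset.sum_cons, Multiset.map_add, Multiset.sum_add,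
      add_mul, ih, Multiset.map_map]
    congr 1
    rw [← Multiset.sum_map_mul_left]
    simp

lemma multiset_sup_mem (t : Multiset NNReal) (h : t ≠ 0) : t.sup ∈ t := by
  induction t using Multiset.induction with
  | empty => exact absurd rfl h
  | cons a s ih =>
    rw [Multiset.sup_cons]
    rcases eq_or_ne s 0 with rfl | hs
    · simp
    · rcases le_total a s.sup with hle | hle
      · rw [sup_of_le_right hle]
        exact Multiset.mem_cons_of_mem (ih hs)
      · rw [sup_of_le_left hle]
        exact Multiset.mem_cons_self a s

lemma freq_lower (s : Multiset ℂ) (ρ : ℝ) (hρ : 0 < ρ)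
    (hmem : ∃ a ∈ s, ‖a‖ = ρ) (hle : ∀ a ∈ s, ‖a‖ ≤ ρ)
    (ε : ℝ) (hε : 0 < ε) (hε1 : ε < 1) :
    ∃ᶠ n : ℕ in atTop, (1 - ε) * ρ ^ n ≤ ‖(s.map (· ^ n)).sum‖ := by
  classical
  set T : Multiset (ℂ × ℂ) := s ×ˢ s with hT
  set w : ℂ × ℂ → ℂ := fun p => p.1 * (starRingEnd ℂ) p.2 / ((ρ : ℂ) ^ 2) with hw
  have hρC : (ρ : ℂ) ≠ 0 := by exact_mod_cast hρ.ne'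
  have hwle : ∀ p ∈ T, ‖w p‖ ≤ 1 := by
    intro p hp
    have hp' := Multiset.mem_product.mp hp
    rw [hw]
    have h1 := hle p.1 hp'.1
    have h2 := hle p.2 hp'.2
    rw [norm_div, norm_mul, norm_pow, RingHomIsometric.norm_map, Complex.norm_real,
      Real.norm_of_nonneg hρ.le]
    rw [div_le_one (by positivity)]
    calc ‖p.1‖ * ‖p.2‖ ≤ ρ * ρ := by
          exact mul_le_mul h1 h2 (norm_nonneg _) hρ.le
      _ = ρ ^ 2 := (sq ρ).symm
  -- B n : the normalized square modulus
  set S : ℕ → ℂ := fun n => (s.map (· ^ n)).sum with hS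
  set B : ℕ → ℝ := fun n => (‖S n‖ / ρ ^ n) ^ 2 with hB
  have hkey : ∀ n : ℕ, (T.map (fun p => w p ^ n)).sum = (B n : ℂ) := by
    intro n
    have h1 : ∀ p : ℂ × ℂ, w p ^ n = (p.1 ^ n) * (starRingEnd ℂ) (p.2 ^ n) / ((ρ:ℂ) ^ (2 * n)) := by
      intro p
      rw [hw]
      rw [div_pow, mul_pow, ← map_pow, ← pow_mul]
    calc (T.map (fun p => w p ^ n)).sum
        = (T.map (fun p => (p.1 ^ n) * (starRingEnd ℂ) (p.2 ^ n) / ((ρ:ℂ) ^ (2 * n)))).sum := by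
          congr 1; exact Multiset.map_congr rfl (fun p _ => h1 p)
      _ = (T.map (fun p => (p.1 ^ n) * (starRingEnd ℂ) (p.2 ^ n))).sum / ((ρ:ℂ) ^ (2 * n)) := by
          simp only [div_eq_mul_inv]
          rw [Multiset.sum_map_mul_right]
      _ = (S n * (starRingEnd ℂ) (S n)) / ((ρ:ℂ) ^ (2 * n)) := by
          congr 1
          rw [hS, ← sum_mul_sum_multiset s s (· ^ n) (fun a => (starRingEnd ℂ) (a ^ n)), map_multiset_sum]
          simp [Multiset.map_map, Function.comp]
      _ = (B n : ℂ) := by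
          rw [Complex.mul_conj, hB]
          push_cast [Complex.normSq_eq_norm_sq]
          rw [div_pow, ← pow_mul, mul_comm n 2]
  set c : ℂ × ℂ → ℂ := fun p => if w p = 1 then 1 else 0 with hc
  set L : ℂ := (T.map c).sum with hLdef
  have hmean : Tendsto (fun N : ℕ => (1 / N : ℂ) * ∑ n ∈ Finset.Ioc 0 N,
      (T.map (fun p => w p ^ n)).sum) atTop (nhds L) := by
    have heq : ∀ N : ℕ, (1 / N : ℂ) * ∑ n ∈ Finset.Ioc 0 N, (T.map (fun p => w p ^ n)).sum
        = (T.map (fun p => (1 / N : ℂ) * ∑ n ∈ Finset.Ioc 0 N, w p ^ n)).sum := by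
      intro N
      rw [multiset_sum_finset_sum T (Finset.Ioc 0 N) (fun p n => w p ^ n),
        Multiset.sum_map_mul_left]
    rw [funext heq]
    exact tendsto_multiset_sum' T _ c (fun p hp => cesaro_pow (w p) (hwle p hp))
  have hr : Tendsto (fun N : ℕ => (1 / N : ℝ) * ∑ n ∈ Finset.Ioc 0 N, B n) atTop (nhds L.re) := by
    have h2 := (Complex.continuous_re.tendsto L).comp hmean
    apply h2.congr
    intro N
    have h3 : (1 / N : ℂ) * ∑ n ∈ Finset.Ioc 0 N, (T.map (fun p => w p ^ n)).sum
        = (((1 / N : ℝ) * ∑ n ∈ Finset.Ioc 0 N, B n : ℝ) : ℂ) := by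
      rw [Finset.sum_congr rfl (fun n _ => hkey n)]
      push_cast
      ring
    simp only [Function.comp_apply, h3, Complex.ofReal_re]
  have hL1 : 1 ≤ L.re := by
    obtain ⟨a, ha, haρ⟩ := hmem
    have hpa : ((a, a) : ℂ × ℂ) ∈ T := Multiset.mem_product.mpr ⟨ha, ha⟩
    have hwa : w (a, a) = 1 := by
      rw [hw]
      simp only
      rw [Complex.mul_conj, Complex.normSq_eq_norm_sq, haρ]
      push_cast
      rw [div_self (pow_ne_zero 2 hρC)]
    have hca : c (a, a) = 1 := by rw [hc]; simp [hwa]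
    rw [hLdef, multiset_sum_re]
    have hnn : ∀ x ∈ Multiset.map (fun p => (c p).re) T, (0:ℝ) ≤ x := by
      intro x hx
      obtain ⟨p, _, rfl⟩ := Multiset.mem_map.mp hx
      rw [hc]
      by_cases h : w p = 1 <;> simp [h]
    have hmemx : (c (a, a)).re ∈ Multiset.map (fun p => (c p).re) T :=
      Multiset.mem_map_of_mem _ hpa
    have := Multiset.single_le_sum hnn _ hmemx
    rwa [hca, Complex.one_re] at this
  -- now the contradiction argument
  by_contra hcon
  rw [Filter.not_frequently] at hcon
  have h1ε : 0 < 1 - ε := by linarith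
  obtain ⟨N₀, hN₀⟩ := Filter.eventually_atTop.mp hcon
  set δ : ℝ := (1 - ε) ^ 2 with hδ
  have hδ0 : 0 ≤ δ := sq_nonneg _
  have hδ1 : δ < 1 := by nlinarith
  have hBδ : ∀ n, N₀ ≤ n → B n ≤ δ := by
    intro n hn
    have := hN₀ n hn
    push_neg at this
    have hdiv : ‖S n‖ / ρ ^ n ≤ 1 - ε := by
      rw [div_le_iff₀ (by positivity)]
      exact this.le
    rw [hB, hδ]
    exact pow_le_pow_left₀ (by positivity) hdiv 2
  set C : ℝ := ∑ n ∈ Finset.Ioc 0 N₀, B n with hC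
  have hub : ∀ᶠ N : ℕ in atTop, (1 / N : ℝ) * ∑ n ∈ Finset.Ioc 0 N, B n ≤ C / N + δ := by
    filter_upwards [eventually_ge_atTop N₀, eventually_ge_atTop 1] with N h1 h2
    have hsplit : ∑ n ∈ Finset.Ioc 0 N₀, B n + ∑ n ∈ Finset.Ioc N₀ N, B n
        = ∑ n ∈ Finset.Ioc 0 N, B n :=
      Finset.sum_Ioc_consecutive _ (Nat.zero_le N₀) h1
    have htail : ∑ n ∈ Finset.Ioc N₀ N, B n ≤ (N : ℝ) * δ := by
      have := Finset.sum_le_card_nsmul (Finset.Ioc N₀ N) B δ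
        (fun n hn => hBδ n (le_of_lt (Finset.mem_Ioc.mp hn).1))
      rw [Nat.card_Ioc, nsmul_eq_mul] at this
      refine this.trans ?_
      have : ((N - N₀ : ℕ) : ℝ) ≤ (N : ℝ) := by
        exact_mod_cast Nat.sub_le N N₀
      nlinarith
    have hNpos : (0 : ℝ) < N := by exact_mod_cast h2
    rw [← hsplit, ← hC]
    rw [mul_comm, ← div_eq_mul_one_div, add_div]
    gcongr
    rw [div_le_iff₀ hNpos]
    linarith [htail]
  have hlim2 : Tendsto (fun N : ℕ => C / N + δ) atTop (nhds (0 + δ)) :=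
    (tendsto_const_div_atTop_nhds_zero_nat C).add tendsto_const_nhds
  have := le_of_tendsto_of_tendsto hr hlim2 hub
  rw [zero_add] at this
  linarith


lemma charpoly_pow_eq {m : ℕ} (M : Matrix (Fin m) (Fin m) ℂ) {n : ℕ} (hn : 1 ≤ n) :
    Matrix.charpoly (M ^ n)
      = ((M.charpoly.roots.map (· ^ n)).map (fun a => Polynomial.X - Polynomial.C a)).prod := by
  apply Polynomial.funext
  intro y
  rw [eval_charpoly_pow M hn y, Polynomial.eval_multiset_prod, Multiset.map_map,
    Multiset.map_map]
  congr 1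
  apply Multiset.map_congr rfl
  intro a _
  simp

lemma trace_pow_eq {m : ℕ} (M : Matrix (Fin m) (Fin m) ℂ) {n : ℕ} (hn : 1 ≤ n) :
    Matrix.trace (M ^ n) = (M.charpoly.roots.map (· ^ n)).sum := by
  rw [Matrix.trace_eq_sum_roots_charpoly, charpoly_pow_eq M hn,
    Polynomial.roots_multiset_prod_X_sub_C]

lemma multiset_sum_le {α : Type*} (s : Multiset α) (f g : α → ℝ) (h : ∀ a ∈ s, f a ≤ g a) :
    (s.map f).sum ≤ (s.map g).sum := by
  induction s using Multiset.induction with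
  | empty => simp
  | cons a s ih =>
    simp only [Multiset.map_cons, Multiset.sum_cons]
    exact add_le_add (h a (Multiset.mem_cons_self a s))
      (ih (fun b hb => h b (Multiset.mem_cons_of_mem hb)))

/-- The spectral radius of a square complex matrix: the maximal absolute value
of the roots in `ℂ` of its characteristic polynomial. -/
noncomputable def specRad {m : ℕ} (M : Matrix (Fin m) (Fin m) ℂ) : ℝ :=
  (((M.charpoly.roots.map fun z => ‖z‖₊).sup : NNReal) : ℝ)

/-- Wimmer's formula: `limsup |tr(M^n)|^{1/n} = ρ(M)`. -/
theorem limsup_abs_trace_pow_rpow_eq_spectralRadius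
    {m : ℕ} (hm : 1 ≤ m) (M : Matrix (Fin m) (Fin m) ℂ) :
    Filter.limsup
      (fun n : ℕ => ‖Matrix.trace (M ^ n)‖ ^ ((1 : ℝ) / n))
      Filter.atTop = specRad M := by
  classical
  set s : Multiset ℂ := M.charpoly.roots with hs
  have hcard : Multiset.card s = m := card_roots_charpoly M
  have hsne : s ≠ 0 := by
    intro h
    rw [h] at hcard
    simp at hcard
    omega
  set ρ : ℝ := specRad M with hρdef
  have hρ0 : 0 ≤ ρ := NNReal.coe_nonneg _
  -- sup attained and bound
  have hmapne : s.map (fun z => ‖z‖₊) ≠ 0 := by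
    simp [Multiset.map_eq_zero, hsne]
  obtain ⟨a₀, ha₀s, ha₀⟩ := Multiset.mem_map.mp (multiset_sup_mem _ hmapne)
  have ha₀ρ : ‖a₀‖ = ρ := by
    rw [hρdef, specRad, ← hs, ← ha₀]
    rw [coe_nnnorm]
  have hle : ∀ b ∈ s, ‖b‖ ≤ ρ := by
    intro b hb
    have h1 : ‖b‖₊ ≤ (Multiset.map (fun z => ‖z‖₊) s).sup :=
      Multiset.le_sup (Multiset.mem_map_of_mem _ hb)
    rw [hρdef, specRad, ← hs]
    calc ‖b‖ = ((‖b‖₊ : NNReal) : ℝ) := by rw [coe_nnnorm]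
      _ ≤ _ := by exact_mod_cast h1
  set S : ℕ → ℂ := fun n => (s.map (· ^ n)).sum with hS
  set v : ℕ → ℝ := fun n => ‖S n‖ ^ ((1 : ℝ) / n) with hv
  have hvnn : ∀ n, 0 ≤ v n := fun n => Real.rpow_nonneg (norm_nonneg _) _
  have hcongr : Filter.limsup
      (fun n : ℕ => ‖Matrix.trace (M ^ n)‖ ^ ((1 : ℝ) / n)) Filter.atTop
      = Filter.limsup v Filter.atTop := by
    apply Filter.limsup_congr
    filter_upwards [Filter.eventually_ge_atTop 1] with n hn
    rw [trace_pow_eq M hn, hv]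
  rw [hcongr]
  rcases eq_or_lt_of_le hρ0 with hρz | hρpos
  · -- ρ = 0 : all roots are zero
    have hall : ∀ b ∈ s, b = 0 := by
      intro b hb
      have := hle b hb
      rw [← hρz] at this
      exact norm_eq_zero.mp (le_antisymm this (norm_nonneg _))
    have hvz : ∀ᶠ n : ℕ in Filter.atTop, v n = 0 := by
      filter_upwards [Filter.eventually_ge_atTop 1] with n hn
      have hSz : S n = 0 := by
        rw [hS]
        have : Multiset.map (· ^ n) s = Multiset.map (fun _ => (0 : ℂ)) s :=
          Multiset.map_congr rfl (fun b hb => by rw [hall b hb, zero_pow (by omega)])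
        simp [this]
      show ‖S n‖ ^ ((1 : ℝ) / n) = 0
      rw [hSz]
      simp only [norm_zero]
      rw [Real.zero_rpow (by positivity)]
    rw [Filter.limsup_congr hvz, Filter.limsup_const, ← hρz]
  · -- ρ > 0
    have hmpos : (0 : ℝ) < (m : ℝ) := by exact_mod_cast hm
    -- upper bound function
    set g : ℕ → ℝ := fun n => (m : ℝ) ^ ((1 : ℝ) / n) * ρ with hg
    have hup : ∀ᶠ n : ℕ in Filter.atTop, v n ≤ g n := by
      filter_upwards [Filter.eventually_ge_atTop 1] with n hn
      have hb : ‖S n‖ ≤ (m : ℝ) * ρ ^ n := by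
        rw [hS]
        refine (norm_multiset_sum_le _).trans ?_
        rw [Multiset.map_map]
        have h1 : ((s.map (fun b => ‖b ^ n‖)).sum : ℝ) ≤ (s.map (fun _ => ρ ^ n)).sum := by
          apply multiset_sum_le
          intro b hb
          rw [norm_pow]
          exact pow_le_pow_left₀ (norm_nonneg _) (hle b hb) n
        refine le_trans (le_of_eq ?_) (h1.trans ?_)
        · rfl
        · rw [Multiset.map_const', Multiset.sum_replicate, hcard, nsmul_eq_mul]
      have hvle : v n ≤ ((m : ℝ) * ρ ^ n) ^ ((1 : ℝ) / n) :=
        Real.rpow_le_rpow (norm_nonneg _) hb (by positivity)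
      refine hvle.trans (le_of_eq ?_)
      rw [Real.mul_rpow hmpos.le (by positivity), hg]
      congr 1
      rw [← Real.rpow_natCast ρ n, ← Real.rpow_mul hρpos.le]
      rw [mul_one_div, div_self (by exact_mod_cast (by omega : n ≠ 0)), Real.rpow_one]
    have hgtend : Filter.Tendsto g Filter.atTop (nhds ρ) := by
      rw [hg]
      have h1 : Filter.Tendsto (fun n : ℕ => (m : ℝ) ^ ((1 : ℝ) / n)) Filter.atTop (nhds 1) := by
        have h0 : Filter.Tendsto (fun n : ℕ => (1 : ℝ) / n) Filter.atTop (nhds 0) :=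
          tendsto_one_div_atTop_nhds_zero_nat
        have hc : ContinuousAt (fun y : ℝ => (m : ℝ) ^ y) 0 :=
          Real.continuousAt_const_rpow hmpos.ne'
        have := hc.tendsto.comp h0
        simpa [Real.rpow_zero, Function.comp_def] using this
      simpa using h1.mul_const ρ
    have hvbdd : Filter.IsBoundedUnder (· ≤ ·) Filter.atTop v :=
      (hgtend.isBoundedUnder_le).mono_le hup
    have hupper : Filter.limsup v Filter.atTop ≤ ρ := by
      have := Filter.limsup_le_limsup hup (Filter.isCoboundedUnder_le_of_le Filter.atTop hvnn) hgtend.isBoundedUnder_le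
      rwa [hgtend.limsup_eq] at this
    have hlower : ρ ≤ Filter.limsup v Filter.atTop := by
      have hfreqle : ∀ ε : ℝ, 0 < ε → ε < 1 → (1 - ε) * ρ ≤ Filter.limsup v Filter.atTop := by
        intro ε hε hε1
        have hfr := freq_lower s ρ hρpos ⟨a₀, ha₀s, ha₀ρ⟩ hle ε hε hε1
        have hfr2 : ∃ᶠ n : ℕ in Filter.atTop, (1 - ε) * ρ ≤ v n := by
          refine (hfr.and_eventually (Filter.eventually_ge_atTop 1)).mono ?_
          rintro n ⟨h1, h2⟩
          have hn0 : (n : ℝ) ≠ 0 := by exact_mod_cast (by omega : n ≠ 0)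
          have h1ε : (0 : ℝ) < 1 - ε := by linarith
          have step1 : ((1 - ε) * ρ ^ n) ^ ((1 : ℝ) / n) ≤ v n := by
            rw [hv]
            exact Real.rpow_le_rpow (by positivity) h1 (by positivity)
          refine le_trans ?_ step1
          rw [Real.mul_rpow h1ε.le (by positivity)]
          have h2' : (ρ ^ n : ℝ) ^ ((1 : ℝ) / n) = ρ := by
            rw [← Real.rpow_natCast ρ n, ← Real.rpow_mul hρpos.le, mul_one_div,
              div_self hn0, Real.rpow_one]
          rw [h2']
          have h3 : (1 - ε) ≤ (1 - ε) ^ ((1 : ℝ) / n) := by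
            nth_rewrite 1 [← Real.rpow_one (1 - ε)]
            apply Real.rpow_le_rpow_of_exponent_ge h1ε (by linarith)
            rw [div_le_one (by exact_mod_cast (by omega : 0 < n))]
            exact_mod_cast h2
          exact mul_le_mul_of_nonneg_right h3 hρpos.le
        exact Filter.le_limsup_of_frequently_le hfr2 hvbdd
      by_contra hcon
      push_neg at hcon
      set lv := Filter.limsup v Filter.atTop with hlv
      have hlv0 : 0 ≤ lv :=
        Filter.le_limsup_of_frequently_le (Filter.Frequently.of_forall hvnn) hvbdd
      have hεdef : (0 : ℝ) < (ρ - lv) / (2 * ρ) := by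
        apply div_pos (by linarith) (by linarith)
      have hεlt : (ρ - lv) / (2 * ρ) < 1 := by
        rw [div_lt_one (by linarith)]
        linarith
      have := hfreqle _ hεdef hεlt
      have hcalc : (1 - (ρ - lv) / (2 * ρ)) * ρ = ρ - (ρ - lv) / 2 := by
        field_simp
      rw [hcalc] at this
      linarith
    exact le_antisymm hupper hlower
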